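/- arXiv:1303.1288 — 2 statements merged into one kernel-verified Lean document; each statement's English description precedes it below -/
import Mathlib

section
/- The Clopper–Pearson interval has coverage at least 1-α: for every p ∈ (0,1), integers n ≥ 1, and α ∈ (0,1), if X ~ Binomial(n,p) and the (random) interval [p_L(X), p_U(X)] is defined by p_L(X) = unique solution of P(Bin(n,q) ≥ X) = α/2 in q (with p_L(0) = 0) and p_U(X) = unique solution of P(Bin(n,q) ≤ X) = α/2 in q (with p_U(n) = 1), then P(p_L(X) ≤ p ≤ p_U(X)) ≥ 1-α. -/
open Finset

private def cpT (n : ℕ) (q : ℝ) (k : ℕ) : ℝ := (n.choose k : ℝ) * q ^ k * (1 - q) ^ (n - k)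

private def cpF (n X : ℕ) (q : ℝ) : ℝ := ∑ k ∈ Icc X n, cpT n q k

private lemma cpT_nonneg (n k : ℕ) {q : ℝ} (h0 : 0 ≤ q) (h1 : q ≤ 1) : 0 ≤ cpT n q k := by
  unfold cpT
  apply mul_nonneg (mul_nonneg (by positivity) (pow_nonneg h0 _)) (pow_nonneg (by linarith) _)

private lemma cpSum (n : ℕ) (q : ℝ) : ∑ k ∈ range (n+1), cpT n q k = 1 := by
  have h := add_pow q (1 - q) n
  rw [show q + (1-q) = (1:ℝ) by ring, one_pow] at h
  rw [h]
  exact sum_congr rfl fun k _ => by unfold cpT; ring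

private lemma cpT_hasDerivAt (n k : ℕ) (q : ℝ) :
    HasDerivAt (fun x => cpT n x k)
      ((n.choose k : ℝ) * ((k:ℝ) * q^(k-1)) * (1-q)^(n-k)
        + (n.choose k : ℝ) * q^k * (((n-k:ℕ):ℝ) * (1-q)^(n-k-1) * (-1))) q := by
  have h1 : HasDerivAt (fun x : ℝ => (n.choose k : ℝ) * x ^ k)
      ((n.choose k : ℝ) * ((k:ℝ) * q^(k-1))) q := (hasDerivAt_pow k q).const_mul _
  have hs : HasDerivAt (fun x : ℝ => 1 - x) (-1) q := (hasDerivAt_id q).const_sub 1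
  have h2 : HasDerivAt (fun x : ℝ => (1 - x) ^ (n-k))
      (((n-k:ℕ):ℝ) * (1-q)^(n-k-1) * (-1)) q := by
    have := (hasDerivAt_pow (n-k) (1-q)).comp q hs
    simpa [Function.comp_def] using this
  exact h1.mul h2

private lemma cp_choose_mul_left {n k : ℕ} (h1 : 1 ≤ k) (h2 : k ≤ n) :
    k * n.choose k = n * (n-1).choose (k-1) := by
  have h := Nat.add_one_mul_choose_eq (n-1) (k-1)
  rw [show n-1+1 = n by omega, show k-1+1 = k by omega] at h
  rw [mul_comm, h, mul_comm]

private lemma cp_choose_mul_right {n k : ℕ} (h2 : k ≤ n) :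
    (n - k) * n.choose k = n * (n-1).choose k := by
  rcases eq_or_lt_of_le h2 with rfl | h
  · rcases Nat.eq_zero_or_pos k with rfl | hk
    · simp
    · simp [Nat.sub_self, Nat.choose_eq_zero_of_lt (show k - 1 < k by omega)]
  · have key := cp_choose_mul_left (n := n) (k := k+1) (by omega) (by omega)
    simp only [Nat.add_sub_cancel] at key
    calc (n - k) * n.choose k = n.choose k * (n - k) := mul_comm _ _
      _ = n.choose (k+1) * (k+1) := (Nat.choose_succ_right_eq n k).symm
      _ = (k+1) * n.choose (k+1) := mul_comm _ _
      _ = n * (n-1).choose k := key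

private lemma cpF_hasDerivAt (n X : ℕ) (hX : 1 ≤ X) (hXn : X ≤ n) (q : ℝ) :
    HasDerivAt (cpF n X)
      ((n : ℝ) * ((n-1).choose (X-1) : ℝ) * q^(X-1) * (1-q)^(n-X)) q := by
  set u : ℕ → ℝ := fun k => (n:ℝ) * ((n-1).choose (k-1) : ℝ) * q^(k-1) * (1-q)^(n-k) with hu
  have hder : HasDerivAt (cpF n X)
      (∑ k ∈ Icc X n, ((n.choose k : ℝ) * ((k:ℝ) * q^(k-1)) * (1-q)^(n-k)
        + (n.choose k : ℝ) * q^k * (((n-k:ℕ):ℝ) * (1-q)^(n-k-1) * (-1)))) q := by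
    unfold cpF
    exact HasDerivAt.fun_sum fun k _ => cpT_hasDerivAt n k q
  have hterm : ∀ k ∈ Icc X n,
      ((n.choose k : ℝ) * ((k:ℝ) * q^(k-1)) * (1-q)^(n-k)
        + (n.choose k : ℝ) * q^k * (((n-k:ℕ):ℝ) * (1-q)^(n-k-1) * (-1)))
      = u k - u (k+1) := by
    intro k hk
    rw [mem_Icc] at hk
    have hA : ((k:ℝ) * (n.choose k : ℝ)) = (n:ℝ) * ((n-1).choose (k-1) : ℝ) := by
      have := cp_choose_mul_left (n := n) (k := k) (by omega) hk.2
      exact_mod_cast congrArg (Nat.cast : ℕ → ℝ) this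
    have hB : (((n-k:ℕ)):ℝ) * (n.choose k : ℝ) = (n:ℝ) * ((n-1).choose k : ℝ) := by
      have := cp_choose_mul_right (n := n) (k := k) hk.2
      exact_mod_cast congrArg (Nat.cast : ℕ → ℝ) this
    simp only [hu]
    rw [show (k+1) - 1 = k from rfl, show n - (k+1) = n - k - 1 by omega]
    rw [show ((n:ℝ) * ((n-1).choose (k-1) : ℝ) * q^(k-1) * (1-q)^(n-k)) 
        = ((k:ℝ) * (n.choose k : ℝ)) * q^(k-1) * (1-q)^(n-k) by rw [hA]]
    rw [show ((n:ℝ) * ((n-1).choose k : ℝ) * q^k * (1-q)^(n-k-1)) 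
        = ((((n-k:ℕ)):ℝ) * (n.choose k : ℝ)) * q^k * (1-q)^(n-k-1) by rw [hB]]
    ring
  rw [Finset.sum_congr rfl hterm] at hder
  have htel : ∑ k ∈ Icc X n, (u k - u (k+1)) = u X - u (n+1) := by
    rw [← Finset.Ico_add_one_right_eq_Icc, Finset.sum_Ico_eq_sum_range]
    have := Finset.sum_range_sub' (fun i => u (X + i)) (n + 1 - X)
    simpa [Nat.add_sub_cancel' (show X ≤ n + 1 by omega), add_assoc] using this
  have hzero : u (n+1) = 0 := by
    simp only [hu, Nat.add_sub_cancel]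
    rw [Nat.choose_eq_zero_of_lt (by omega : n - 1 < n)]
    simp
  rw [htel, hzero, sub_zero] at hder
  exact hder

private lemma cpF_monotoneOn (n X : ℕ) (hX : 1 ≤ X) (hXn : X ≤ n) :
    MonotoneOn (cpF n X) (Set.Icc (0:ℝ) 1) := by
  have hdiff : Differentiable ℝ (cpF n X) :=
    fun q => (cpF_hasDerivAt n X hX hXn q).differentiableAt
  apply monotoneOn_of_deriv_nonneg (convex_Icc 0 1) hdiff.continuous.continuousOn
    hdiff.differentiableOn
  intro x hx
  rw [interior_Icc] at hx
  rw [(cpF_hasDerivAt n X hX hXn x).deriv]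
  have h1 : (0:ℝ) ≤ x := hx.1.le
  have h2 : (0:ℝ) ≤ 1 - x := by linarith [hx.2]
  positivity

private lemma cpSplit (n X : ℕ) (hX : X ≤ n) (q : ℝ) :
    ∑ k ∈ range (X+1), cpT n q k + cpF n (X+1) q = 1 := by
  have h1 := Finset.sum_range_add_sum_Ico (cpT n q) (Nat.succ_le_succ hX)
  rw [cpSum] at h1
  unfold cpF
  rw [← Finset.Ico_add_one_right_eq_Icc]
  exact h1

theorem clopper_pearson_coverage (n : ℕ) (hn : 1 ≤ n) (p α : ℝ)
    (hp : p ∈ Set.Ioo (0:ℝ) 1) (hα0 : 0 < α) (hα1 : α < 1)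
    (pL pU : ℕ → ℝ)
    (hpL0 : pL 0 = 0) (hpUn : pU n = 1)
    (hpL : ∀ X, 1 ≤ X → X ≤ n → pL X ∈ Set.Ioo (0:ℝ) 1 ∧
      ∑ k ∈ Finset.Icc X n, (n.choose k : ℝ) * (pL X) ^ k * (1 - pL X) ^ (n - k) = α / 2)
    (hpU : ∀ X, X ≤ n - 1 → pU X ∈ Set.Ioo (0:ℝ) 1 ∧
      ∑ k ∈ Finset.range (X + 1), (n.choose k : ℝ) * (pU X) ^ k * (1 - pU X) ^ (n - k) = α / 2) :
    1 - α ≤ ∑ X ∈ (Finset.range (n + 1)).filter (fun X => pL X ≤ p ∧ p ≤ pU X),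
      (n.choose X : ℝ) * p ^ X * (1 - p) ^ (n - X) := by
  obtain ⟨hp0, hp1⟩ := hp
  set S := Finset.range (n + 1) with hS
  set A := S.filter (fun X => p < pL X) with hA
  set B := S.filter (fun X => pU X < p) with hB
  have hnn : ∀ k ∈ S, 0 ≤ cpT n p k := fun k _ => cpT_nonneg n k hp0.le hp1.le
  -- bound on A
  have hAbound : ∑ X ∈ A, cpT n p X ≤ α / 2 := by
    rcases A.eq_empty_or_nonempty with h | h
    · rw [h, Finset.sum_empty]; positivity
    · set X0 := A.min' h with hX0
      have hX0A : X0 ∈ A := A.min'_mem h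
      rw [hA, Finset.mem_filter, hS, Finset.mem_range] at hX0A
      obtain ⟨hX0S, hX0p⟩ := hX0A
      have hX01 : 1 ≤ X0 := by
        by_contra hc
        push_neg at hc
        interval_cases X0
        rw [hpL0] at hX0p; linarith
      obtain ⟨hIoo, heq⟩ := hpL X0 hX01 (by omega)
      have hsub : A ⊆ Icc X0 n := by
        intro X hX
        rw [Finset.mem_Icc]
        refine ⟨A.min'_le X hX, ?_⟩
        rw [hA, Finset.mem_filter, hS, Finset.mem_range] at hX
        omega
      calc ∑ X ∈ A, cpT n p X
          ≤ ∑ X ∈ Icc X0 n, cpT n p X :=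
            Finset.sum_le_sum_of_subset_of_nonneg hsub
              (fun k _ _ => cpT_nonneg n k hp0.le hp1.le)
        _ = cpF n X0 p := rfl
        _ ≤ cpF n X0 (pL X0) :=
            cpF_monotoneOn n X0 hX01 (by omega) ⟨hp0.le, hp1.le⟩
              ⟨hIoo.1.le, hIoo.2.le⟩ hX0p.le
        _ = α / 2 := heq
  -- bound on B
  have hBbound : ∑ X ∈ B, cpT n p X ≤ α / 2 := by
    rcases B.eq_empty_or_nonempty with h | h
    · rw [h, Finset.sum_empty]; positivity
    · set X1 := B.max' h with hX1
      have hX1B : X1 ∈ B := B.max'_mem h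
      rw [hB, Finset.mem_filter, hS, Finset.mem_range] at hX1B
      obtain ⟨hX1S, hX1p⟩ := hX1B
      have hX1n : X1 ≠ n := by
        intro hc
        rw [hc, hpUn] at hX1p; linarith
      obtain ⟨hIoo, heq⟩ := hpU X1 (by omega)
      have hsub : B ⊆ range (X1 + 1) := by
        intro X hX
        rw [Finset.mem_range, Nat.lt_succ_iff]
        exact B.le_max' X hX
      have hmono : cpF n (X1+1) (pU X1) ≤ cpF n (X1+1) p :=
        cpF_monotoneOn n (X1+1) (Nat.succ_le_succ (Nat.zero_le _)) (by omega)
          ⟨hIoo.1.le, hIoo.2.le⟩ ⟨hp0.le, hp1.le⟩ hX1p.le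
      have hsplit1 := cpSplit n X1 (by omega) p
      have hsplit2 := cpSplit n X1 (by omega) (pU X1)
      have heq' : ∑ k ∈ range (X1+1), cpT n (pU X1) k = α / 2 := heq
      calc ∑ X ∈ B, cpT n p X
          ≤ ∑ k ∈ range (X1+1), cpT n p k :=
            Finset.sum_le_sum_of_subset_of_nonneg hsub
              (fun k _ _ => cpT_nonneg n k hp0.le hp1.le)
        _ ≤ α / 2 := by linarith
  -- assemble
  have hCeq : S.filter (fun X => pL X ≤ p ∧ p ≤ pU X) = S \ (A ∪ B) := by
    ext X
    constructor
    · intro hX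
      rw [Finset.mem_filter] at hX
      rw [Finset.mem_sdiff, Finset.mem_union]
      refine ⟨hX.1, ?_⟩
      rintro (h | h) <;> rw [Finset.mem_filter] at h
      · linarith [hX.2.1, h.2]
      · linarith [hX.2.2, h.2]
    · intro hX
      rw [Finset.mem_sdiff, Finset.mem_union] at hX
      rw [Finset.mem_filter]
      refine ⟨hX.1, ?_, ?_⟩
      · by_contra hc
        exact hX.2 (Or.inl (Finset.mem_filter.mpr ⟨hX.1, not_le.mp hc⟩))
      · by_contra hc
        exact hX.2 (Or.inr (Finset.mem_filter.mpr ⟨hX.1, not_le.mp hc⟩))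
  have hABsub : A ∪ B ⊆ S := Finset.union_subset (Finset.filter_subset _ _) (Finset.filter_subset _ _)
  have hsd : ∑ X ∈ S \ (A ∪ B), cpT n p X = ∑ X ∈ S, cpT n p X - ∑ X ∈ A ∪ B, cpT n p X :=
    Finset.sum_sdiff_eq_sub hABsub
  have hunion : ∑ X ∈ A ∪ B, cpT n p X + ∑ X ∈ A ∩ B, cpT n p X
      = ∑ X ∈ A, cpT n p X + ∑ X ∈ B, cpT n p X := Finset.sum_union_inter
  have hinter : 0 ≤ ∑ X ∈ A ∩ B, cpT n p X :=
    Finset.sum_nonneg fun k hk => cpT_nonneg n k hp0.le hp1.le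
  have hone : ∑ X ∈ S, cpT n p X = 1 := cpSum n p
  have : 1 - α ≤ ∑ X ∈ S \ (A ∪ B), cpT n p X := by
    rw [hsd, hone]; linarith
  rw [hCeq]
  exact this
end

section
/- The one-sided Clopper–Pearson upper bound has coverage at least 1-α: for every p ∈ (0,1), n ≥ 1, α ∈ (0,1), if X ~ Binomial(n,p) and p_U(X) is the unique solution in q of P(Bin(n,q) ≤ X) = α for X < n (with p_U(n) = 1), then P(p ≤ p_U(X)) ≥ 1-α. -/
open Finset

private lemma nid1 (n k : ℕ) (hk : 1 ≤ k) : k * n.choose k = n * ((n - 1).choose (k - 1)) := by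
  rcases n with _ | m
  · rcases k with _ | j
    · omega
    · simp [Nat.choose_eq_zero_of_lt (by omega : 0 < j + 1)]
  · rcases k with _ | j
    · omega
    · simp only [Nat.add_sub_cancel]
      have h := Nat.add_one_mul_choose_eq m j
      rw [h, mul_comm]

private lemma nid2 (n k : ℕ) (hk : k < n) : (n - k) * n.choose k = n * ((n - 1).choose k) := by
  rcases n with _ | m
  · omega
  · have hkm : k ≤ m := by omega
    simp only [Nat.add_sub_cancel]
    rw [← Nat.choose_symm (show k ≤ m + 1 by omega), ← Nat.choose_symm hkm]
    have h1 : m + 1 - k = (m - k) + 1 := by omega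
    rw [h1]
    have h := Nat.add_one_mul_choose_eq m (m - k)
    rw [h, mul_comm]


private noncomputable def telA (n : ℕ) (q : ℝ) (k : ℕ) : ℝ :=
  if k = 0 then 0 else (n : ℝ) * ((n - 1).choose (k - 1)) * q ^ (k - 1) * (1 - q) ^ (n - k)

private lemma term_hasDerivAt (n k : ℕ) (hk : k < n) (q : ℝ) :
    HasDerivAt (fun q : ℝ => (n.choose k : ℝ) * q ^ k * (1 - q) ^ (n - k))
      (telA n q k - telA n q (k + 1)) q := by
  have h1 : HasDerivAt (fun q : ℝ => q ^ k) ((k : ℝ) * q ^ (k - 1)) q := hasDerivAt_pow k q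
  have h2 : HasDerivAt (fun q : ℝ => (1 - q) ^ (n - k))
      (((n - k : ℕ) : ℝ) * (1 - q) ^ (n - k - 1) * (-1)) q := by
    exact (hasDerivAt_pow (n - k) (1 - q)).comp q ((hasDerivAt_id q).const_sub 1)
  have h3 : HasDerivAt (fun q : ℝ => (n.choose k : ℝ) * q ^ k * (1 - q) ^ (n - k)) _ q :=
    (h1.const_mul (n.choose k : ℝ)).mul h2
  convert h3 using 1
  have e2 : (((n - k : ℕ)) : ℝ) * (n.choose k : ℝ) = (n : ℝ) * ((n - 1).choose k : ℝ) := by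
    exact_mod_cast congrArg (Nat.cast : ℕ → ℝ) (nid2 n k hk)
  have hnk : n - (k + 1) = n - k - 1 := by omega
  rcases Nat.eq_zero_or_pos k with rfl | hkpos
  · simp only [telA, Nat.add_sub_cancel, hnk, if_pos rfl, if_neg (Nat.one_ne_zero)]
    simp only [Nat.sub_zero] at e2 ⊢
    push_cast
    linear_combination ((1-q)^(n-1)) * e2
  · have e1 : ((k : ℕ) : ℝ) * (n.choose k : ℝ) = (n : ℝ) * ((n - 1).choose (k - 1) : ℝ) := by
      exact_mod_cast congrArg (Nat.cast : ℕ → ℝ) (nid1 n k hkpos)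
    simp only [telA, Nat.add_sub_cancel, hnk, if_neg (by omega : k ≠ 0),
      if_neg (by omega : k + 1 ≠ 0)]
    linear_combination (-(q ^ (k-1) * (1-q)^(n-k))) * e1 + (q ^ k * (1-q)^(n-k-1)) * e2

private noncomputable def binCDF (n X : ℕ) (q : ℝ) : ℝ :=
  ∑ k ∈ Finset.range (X + 1), (n.choose k : ℝ) * q ^ k * (1 - q) ^ (n - k)

private lemma binCDF_hasDerivAt (n X : ℕ) (hX : X < n) (q : ℝ) :
    HasDerivAt (binCDF n X) (-(telA n q (X + 1))) q := by
  have h : HasDerivAt (binCDF n X)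
      (∑ k ∈ Finset.range (X + 1), (telA n q k - telA n q (k + 1))) q := by
    apply HasDerivAt.fun_sum
    intro k hk
    exact term_hasDerivAt n k (by simp at hk; omega) q
  rwa [Finset.sum_range_sub' (fun k => telA n q k), show telA n q 0 = 0 from if_pos rfl,
    zero_sub] at h

private lemma binCDF_antitone (n X : ℕ) (hX : X < n) :
    AntitoneOn (binCDF n X) (Set.Icc (0:ℝ) 1) := by
  apply antitoneOn_of_deriv_nonpos (convex_Icc 0 1)
  · apply Continuous.continuousOn
    unfold binCDF
    continuity
  · intro x hx
    exact ((binCDF_hasDerivAt n X hX x).differentiableAt).differentiableWithinAt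
  · intro x hx
    rw [interior_Icc] at hx
    rw [(binCDF_hasDerivAt n X hX x).deriv]
    simp only [telA, if_neg (Nat.succ_ne_zero X), Nat.add_sub_cancel]
    have h1 : (0:ℝ) ≤ x ^ X := pow_nonneg hx.1.le _
    have h2 : (0:ℝ) ≤ (1 - x) ^ (n - (X + 1)) := pow_nonneg (by linarith [hx.2]) _
    have h3 : (0:ℝ) ≤ (n : ℝ) * ((n-1).choose X) := by positivity
    have := mul_nonneg (mul_nonneg h3 h1) h2
    linarith

theorem clopper_pearson_upper_bound_coverage (n : ℕ) (hn : 1 ≤ n) (p α : ℝ)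
    (hp : p ∈ Set.Ioo (0:ℝ) 1) (hα0 : 0 < α) (hα1 : α < 1)
    (pU : ℕ → ℝ) (hpUn : pU n = 1)
    (hpU : ∀ X, X < n → pU X ∈ Set.Ioo (0:ℝ) 1 ∧
      ∑ k ∈ Finset.range (X + 1), (n.choose k : ℝ) * (pU X) ^ k * (1 - pU X) ^ (n - k) = α) :
    1 - α ≤ ∑ X ∈ (Finset.range (n + 1)).filter (fun X => p ≤ pU X),
      (n.choose X : ℝ) * p ^ X * (1 - p) ^ (n - X) := by
  obtain ⟨hp0, hp1⟩ := hp
  set f : ℕ → ℝ := fun X => (n.choose X : ℝ) * p ^ X * (1 - p) ^ (n - X) with hf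
  have hfnonneg : ∀ X, 0 ≤ f X := by
    intro X
    have : (0:ℝ) ≤ (1 - p) ^ (n - X) := pow_nonneg (by linarith) _
    have : (0:ℝ) ≤ p ^ X := pow_nonneg hp0.le _
    positivity
  have htot : ∑ X ∈ Finset.range (n + 1), f X = 1 := by
    have h := add_pow p (1 - p) n
    have h2 : ((p + (1 - p)) : ℝ) ^ n = 1 := by norm_num
    rw [h2] at h
    rw [h]
    apply Finset.sum_congr rfl
    intro k _
    simp only [hf]
    ring
  have hsplit := Finset.sum_filter_add_sum_filter_not (Finset.range (n + 1))
    (fun X => p ≤ pU X) f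
  -- bound the complement sum by α
  have hcomp : ∑ X ∈ (Finset.range (n + 1)).filter (fun X => ¬ p ≤ pU X), f X ≤ α := by
    set S := (Finset.range (n + 1)).filter (fun X => ¬ p ≤ pU X) with hS
    rcases S.eq_empty_or_nonempty with h | h
    · rw [h]; simp; linarith
    · set M := S.max' h with hM
      have hMS : M ∈ S := S.max'_mem h
      simp only [hS, Finset.mem_filter, Finset.mem_range] at hMS
      have hMn : M < n := by
        rcases Nat.lt_or_ge M n with h' | h'
        · exact h'
        · exfalso
          have : M = n := by omega
          rw [this, hpUn] at hMS
          exact hMS.2 hp1.le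
      have hpUM := hpU M hMn
      have hsub : S ⊆ Finset.range (M + 1) := by
        intro x hx
        rw [Finset.mem_range]
        exact Nat.lt_succ_of_le (S.le_max' x hx)
      calc ∑ X ∈ S, f X ≤ ∑ X ∈ Finset.range (M + 1), f X :=
              Finset.sum_le_sum_of_subset_of_nonneg hsub (fun i _ _ => hfnonneg i)
        _ = binCDF n M p := rfl
        _ ≤ binCDF n M (pU M) := by
            apply binCDF_antitone n M hMn
            · exact ⟨(hpUM.1).1.le, (hpUM.1).2.le⟩
            · exact ⟨hp0.le, hp1.le⟩
            · exact (not_le.mp hMS.2).le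
        _ = α := hpUM.2
  linarith
end
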